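/- For the Jackson network, if the quadruple (ρ, r̄, c, β) satisfies system (8), then with τ_i := Σ_{I : i ∉ I} ρ_I and D the matrix with columns d_i (as in the network's constraint directions), one has D τ = −β + Σ_i c_i^+ a_i e_i. Since D is invertible, τ (and hence r̄_v = τ_i r_{∅,v} for v = −e_i or v = e_{i,j}, and r̄_{e_i} = a_i) is uniquely and continuously determined by β and the c's. -/

import Mathlib

open Finset

/-- Maximum principle: a positive maximum leads to a contradiction. -/
lemma jackson_maxprin {N : ℕ}
    (σ cm : Fin N → ℝ) (c p : Fin N → Fin N → ℝ) (p0 : Fin N → ℝ)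
    (hσ : ∀ i, 0 < σ i) (hcm : ∀ i, 0 < cm i)
    (hc : ∀ i j, 0 < c i j)
    (hp : ∀ i j, 0 ≤ p i j) (hp0 : ∀ i, 0 ≤ p0 i)
    (hirr : ∀ i j : Fin N, Relation.TransGen (fun i j => 0 < p i j) i j)
    (hexit : ∃ i, 0 < p0 i)
    (x : Fin N → ℝ)
    (hx : ∀ i, cm i * σ i * p0 i * x i
      + ∑ k ∈ Finset.univ.erase i, c i k * σ i * p i k * (x i - x k) = 0)
    (m : Fin N) (hm : ∀ k, x k ≤ x m) (hpos : 0 < x m) : False := by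
  have C : ∀ j, x j = x m → p0 j = 0 ∧ ∀ l, 0 < p j l → x l = x m := by
    intro j hj
    have h := hx j
    have hd : 0 ≤ cm j * σ j * p0 j * x j :=
      mul_nonneg (mul_nonneg (mul_nonneg (hcm j).le (hσ j).le) (hp0 j))
        (by rw [hj]; exact hpos.le)
    have hterm : ∀ k ∈ Finset.univ.erase j,
        0 ≤ c j k * σ j * p j k * (x j - x k) := by
      intro k _
      exact mul_nonneg (mul_nonneg (mul_nonneg (hc j k).le (hσ j).le) (hp j k))
        (by rw [hj]; linarith [hm k])
    have hsumnn : 0 ≤ ∑ k ∈ Finset.univ.erase j, c j k * σ j * p j k * (x j - x k) :=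
      Finset.sum_nonneg hterm
    have hd0 : cm j * σ j * p0 j * x j = 0 := by linarith
    have hs0 : ∑ k ∈ Finset.univ.erase j, c j k * σ j * p j k * (x j - x k) = 0 := by
      linarith
    have hzero : ∀ k ∈ Finset.univ.erase j, c j k * σ j * p j k * (x j - x k) = 0 :=
      (Finset.sum_eq_zero_iff_of_nonneg hterm).mp hs0
    constructor
    · by_contra h0
      have hpp : 0 < p0 j := lt_of_le_of_ne (hp0 j) (Ne.symm h0)
      have : 0 < cm j * σ j * p0 j * x j :=
        mul_pos (mul_pos (mul_pos (hcm j) (hσ j)) hpp) (hj ▸ hpos)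
      linarith
    · intro l hl
      by_cases hlj : l = j
      · rw [hlj, hj]
      · have hmem : l ∈ Finset.univ.erase j := by
          simp [Finset.mem_erase, hlj]
        have hz := hzero l hmem
        have hcc : c j l * σ j * p j l ≠ 0 :=
          (mul_pos (mul_pos (hc j l) (hσ j)) hl).ne'
        have : x j - x l = 0 := by
          rcases mul_eq_zero.mp hz with h' | h'
          · exact absurd h' hcc
          · exact h'
        rw [← hj]; linarith
  have reach : ∀ jj, Relation.TransGen (fun a b => 0 < p a b) m jj → x jj = x m := by
    intro jj h
    induction h with
    | single hr => exact (C m rfl).2 _ hr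
    | tail _ hr ih => exact (C _ ih).2 _ hr
  obtain ⟨e, he⟩ := hexit
  have h0 := (C e (reach e (hirr m e))).1
  exact he.ne' h0

/-- Kernel triviality for the (transposed) matrix D. -/
lemma jackson_ker {N : ℕ}
    (σ cm : Fin N → ℝ) (c p : Fin N → Fin N → ℝ) (p0 : Fin N → ℝ)
    (hσ : ∀ i, 0 < σ i) (hcm : ∀ i, 0 < cm i)
    (hc : ∀ i j, 0 < c i j)
    (hp : ∀ i j, 0 ≤ p i j) (hp0 : ∀ i, 0 ≤ p0 i)
    (hirr : ∀ i j : Fin N, Relation.TransGen (fun i j => 0 < p i j) i j)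
    (hexit : ∃ i, 0 < p0 i)
    (x : Fin N → ℝ)
    (hx : ∀ i, cm i * σ i * p0 i * x i
      + ∑ k ∈ Finset.univ.erase i, c i k * σ i * p i k * (x i - x k) = 0) :
    ∀ i, x i = 0 := by
  by_contra hne
  push_neg at hne
  obtain ⟨i0, hi0⟩ := hne
  have hx' : ∀ i, cm i * σ i * p0 i * (-x i)
      + ∑ k ∈ Finset.univ.erase i, c i k * σ i * p i k * (-x i - -x k) = 0 := by
    intro i
    have hsum : ∑ k ∈ Finset.univ.erase i, c i k * σ i * p i k * (-x i - -x k)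
        = -∑ k ∈ Finset.univ.erase i, c i k * σ i * p i k * (x i - x k) := by
      rw [← Finset.sum_neg_distrib]
      exact Finset.sum_congr rfl (fun k _ => by ring)
    rw [hsum]
    have := hx i
    linarith
  obtain ⟨m, -, hm⟩ := Finset.exists_max_image Finset.univ x ⟨i0, Finset.mem_univ i0⟩
  obtain ⟨m', -, hm'⟩ := Finset.exists_max_image Finset.univ (fun i => -x i)
    ⟨i0, Finset.mem_univ i0⟩
  by_cases hpos : 0 < x m
  · exact jackson_maxprin σ cm c p p0 hσ hcm hc hp hp0 hirr hexit x hx m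
      (fun k => hm k (Finset.mem_univ k)) hpos
  · refine jackson_maxprin σ cm c p p0 hσ hcm hc hp hp0 hirr hexit
      (fun i => -x i) hx' m' (fun k => hm' k (Finset.mem_univ k)) ?_
    have h1 : x i0 ≤ x m := hm i0 (Finset.mem_univ i0)
    have h2 : -x i0 ≤ -x m' := hm' i0 (Finset.mem_univ i0)
    push_neg at hpos
    have : x i0 < 0 := lt_of_le_of_ne (le_trans h1 hpos) hi0
    linarith

lemma jackson_indsum {N : ℕ} (K : Finset (Fin N)) (ρ : Finset (Fin N) → ℝ)
    (k : Fin N) (X : ℝ) :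
    (∑ I ∈ K.powerset, if k ∈ I then 0 else ρ I * X)
      = (∑ I ∈ K.powerset.filter (fun I => k ∉ I), ρ I) * X := by
  rw [Finset.sum_mul, Finset.sum_filter]
  refine Finset.sum_congr rfl fun I _ => ?_
  by_cases h : k ∈ I <;> simp [h]

lemma jackson_dtau {N : ℕ} (K : Finset (Fin N))
    (σ cm : Fin N → ℝ) (c p : Fin N → Fin N → ℝ) (p0 : Fin N → ℝ)
    (ρ : Finset (Fin N) → ℝ) (k : Fin N) :
    (∑ i, (∑ I ∈ K.powerset.filter (fun I => i ∉ I), ρ I) *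
        (if k = i
          then cm i * σ i * p0 i + ∑ j ∈ Finset.univ.erase i, c i j * σ i * p i j
          else -(c i k * σ i * p i k)))
    = (∑ I ∈ K.powerset, if k ∈ I then 0 else ρ I * (cm k * σ k * p0 k))
      - ∑ I ∈ K.powerset, ρ I *
          ∑ i ∈ Finset.univ \ I, ∑ j ∈ Finset.univ.erase i,
            c i j * σ i * p i j *
              ((if k = j then (1:ℝ) else 0) - (if k = i then (1:ℝ) else 0)) := by
  set τ : Fin N → ℝ := fun i => ∑ I ∈ K.powerset.filter (fun I => i ∉ I), ρ I with hτ
  set g : Fin N → ℝ := fun i => ∑ j ∈ Finset.univ.erase i,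
      c i j * σ i * p i j *
        ((if k = j then (1:ℝ) else 0) - (if k = i then (1:ℝ) else 0)) with hg
  -- step 1: first sum on RHS is τ k * (cm k σ k p0 k)
  rw [jackson_indsum K ρ k]
  -- step 2: swap the double sum
  have hswap : (∑ I ∈ K.powerset, ρ I * ∑ i ∈ Finset.univ \ I, g i)
      = ∑ i, τ i * g i := by
    have h1 : ∀ I, ρ I * ∑ i ∈ Finset.univ \ I, g i
        = ∑ i, if i ∈ I then 0 else ρ I * g i := by
      intro I
      rw [Finset.mul_sum, Finset.sdiff_eq_filter, Finset.sum_filter]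
      refine Finset.sum_congr rfl fun i _ => ?_
      by_cases h : i ∈ I <;> simp [h]
    simp only [h1]
    rw [Finset.sum_comm]
    refine Finset.sum_congr rfl fun i _ => ?_
    rw [hτ]
    rw [jackson_indsum K ρ i (g i)]
  rw [hswap]
  -- step 3: compute g
  have hgk : g k = -∑ j ∈ Finset.univ.erase k, c k j * σ k * p k j := by
    rw [hg, ← Finset.sum_neg_distrib]
    refine Finset.sum_congr rfl fun j hj => ?_
    have : k ≠ j := fun h => (Finset.mem_erase.mp hj).1 h.symm
    simp [this]
  have hgi : ∀ i, k ≠ i → g i = c i k * σ i * p i k := by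
    intro i hki
    simp only [hg]
    rw [Finset.sum_eq_single k]
    · simp [hki]
    · intro j hj hjk
      have : k ≠ j := fun h => hjk h.symm
      simp [this, hki]
    · intro h
      exact absurd (Finset.mem_erase.mpr ⟨hki, Finset.mem_univ k⟩) h
  -- step 4: combine
  have key : ∀ i, τ i * (if k = i
        then cm i * σ i * p0 i + ∑ j ∈ Finset.univ.erase i, c i j * σ i * p i j
        else -(c i k * σ i * p i k))
      = (if i = k then τ k * (cm k * σ k * p0 k) else 0) - τ i * g i := by
    intro i
    by_cases h : k = i
    · subst h
      simp only [eq_self_iff_true, if_true, hgk]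
      ring
    · have h' : i ≠ k := fun hh => h hh.symm
      simp only [if_neg h, if_neg h', hgi i h]
      ring
  rw [Finset.sum_congr rfl (fun i _ => key i)]
  rw [Finset.sum_sub_distrib, Finset.sum_ite_eq' Finset.univ k
    (fun _ => τ k * (cm k * σ k * p0 k))]
  simp [hτ]

/-- for the Jackson network, if (ρ, r̄, c, β) satisfies system
(8) (expressed componentwise via the model's rates), then with
τ_i := Σ_{I : i∉I} ρ_I and D the matrix with columns
d_i = −Σ_{j≠i} c_{i,j} σ_i p_{i,j}(e_j − e_i) + c_i^− σ_i p_{i,0} e_i,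
one has D τ = −β + Σ_i c_i^+ a_i e_i; and since D is invertible (given the
positivity/irreducibility hypotheses), τ is uniquely determined by β and the
c's: any other admissible ρ' yielding the same β gives the same τ. -/
theorem jackson_tau_equation_and_unique {N : ℕ}
    (K : Finset (Fin N))
    (a σ cp cm : Fin N → ℝ) (c p : Fin N → Fin N → ℝ) (p0 : Fin N → ℝ)
    (hσ : ∀ i, 0 < σ i) (hcm : ∀ i, 0 < cm i) (hcp : ∀ i, 0 ≤ cp i)
    (hc : ∀ i j, 0 < c i j) (ha : ∀ i, 0 ≤ a i)
    (hp : ∀ i j, 0 ≤ p i j) (hp0 : ∀ i, 0 ≤ p0 i)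
    (hrow : ∀ i, p0 i + ∑ j, p i j = 1)
    (hirr : ∀ i j : Fin N, Relation.TransGen (fun i j => 0 < p i j) i j)
    (hexit : ∃ i, 0 < p0 i)
    (ρ : Finset (Fin N) → ℝ) (β : Fin N → ℝ)
    (hρ : ∀ I ∈ K.powerset, 0 ≤ ρ I) (hρ1 : ∑ I ∈ K.powerset, ρ I = 1)
    -- β = Σ_{I,v} ρ_I c_v r_{I,v} v, componentwise:
    (hβ : ∀ k, β k = cp k * a k
        - (∑ I ∈ K.powerset, if k ∈ I then 0 else ρ I * (cm k * σ k * p0 k))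
        + ∑ I ∈ K.powerset, ρ I *
            ∑ i ∈ Finset.univ \ I, ∑ j ∈ Finset.univ.erase i,
              c i j * σ i * p i j *
                ((if k = j then (1:ℝ) else 0) - (if k = i then (1:ℝ) else 0))) :
    -- conclusion 1: D τ = −β + Σ_i c_i^+ a_i e_i, componentwise
    (∀ k, (∑ i, (∑ I ∈ K.powerset.filter (fun I => i ∉ I), ρ I) *
        (if k = i
          then cm i * σ i * p0 i + ∑ j ∈ Finset.univ.erase i, c i j * σ i * p i j
          else -(c i k * σ i * p i k)))
      = -β k + cp k * a k) ∧
    -- conclusion 2: τ is uniquely determined by β (and the c's)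
    (∀ ρ' : Finset (Fin N) → ℝ,
      (∀ I ∈ K.powerset, 0 ≤ ρ' I) → (∑ I ∈ K.powerset, ρ' I = 1) →
      (∀ k, β k = cp k * a k
        - (∑ I ∈ K.powerset, if k ∈ I then 0 else ρ' I * (cm k * σ k * p0 k))
        + ∑ I ∈ K.powerset, ρ' I *
            ∑ i ∈ Finset.univ \ I, ∑ j ∈ Finset.univ.erase i,
              c i j * σ i * p i j *
                ((if k = j then (1:ℝ) else 0) - (if k = i then (1:ℝ) else 0))) →
      ∀ i, (∑ I ∈ K.powerset.filter (fun I => i ∉ I), ρ' I)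
        = ∑ I ∈ K.powerset.filter (fun I => i ∉ I), ρ I) := by
  have hconc1 : ∀ (ρ₀ : Finset (Fin N) → ℝ),
      (∀ k, β k = cp k * a k
        - (∑ I ∈ K.powerset, if k ∈ I then 0 else ρ₀ I * (cm k * σ k * p0 k))
        + ∑ I ∈ K.powerset, ρ₀ I *
            ∑ i ∈ Finset.univ \ I, ∑ j ∈ Finset.univ.erase i,
              c i j * σ i * p i j *
                ((if k = j then (1:ℝ) else 0) - (if k = i then (1:ℝ) else 0))) →
      ∀ k, (∑ i, (∑ I ∈ K.powerset.filter (fun I => i ∉ I), ρ₀ I) *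
        (if k = i
          then cm i * σ i * p0 i + ∑ j ∈ Finset.univ.erase i, c i j * σ i * p i j
          else -(c i k * σ i * p i k)))
      = -β k + cp k * a k := by
    intro ρ₀ hβ₀ k
    rw [jackson_dtau K σ cm c p p0 ρ₀ k, hβ₀ k]
    ring
  refine ⟨hconc1 ρ hβ, ?_⟩
  intro ρ' hρ'0 hρ'1 hβ' i
  set D : Matrix (Fin N) (Fin N) ℝ := Matrix.of fun k i =>
    (if k = i
      then cm i * σ i * p0 i + ∑ j ∈ Finset.univ.erase i, c i j * σ i * p i j
      else -(c i k * σ i * p i k)) with hD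
  have hunit : IsUnit D := by
    rw [← Matrix.vecMul_injective_iff_isUnit]
    have hker : ∀ x : Fin N → ℝ, D.vecMul x = 0 → x = 0 := by
      intro x hxv
      funext j
      refine jackson_ker σ cm c p p0 hσ hcm hc hp hp0 hirr hexit x ?_ j
      intro i'
      have hcol := congrFun hxv i'
      simp only [Pi.zero_apply] at hcol
      have hexp : D.vecMul x i' = ∑ k, x k * D k i' := rfl
      rw [hexp] at hcol
      have hsplit : ∑ k, x k * D k i'
          = x i' * D i' i' + ∑ k ∈ Finset.univ.erase i', x k * D k i' := by
        rw [← Finset.add_sum_erase Finset.univ _ (Finset.mem_univ i')]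
      have hdiag : D i' i' = cm i' * σ i' * p0 i'
          + ∑ j ∈ Finset.univ.erase i', c i' j * σ i' * p i' j := by
        simp [hD]
      have hoff : ∀ k ∈ Finset.univ.erase i', x k * D k i'
          = -(x k * (c i' k * σ i' * p i' k)) := by
        intro k hk
        have hne : k ≠ i' := (Finset.mem_erase.mp hk).1
        simp [hD, hne]
      rw [hsplit, hdiag, Finset.sum_congr rfl hoff] at hcol
      have hgoal : cm i' * σ i' * p0 i' * x i'
          + ∑ k ∈ Finset.univ.erase i', c i' k * σ i' * p i' k * (x i' - x k)
          = x i' * (cm i' * σ i' * p0 i'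
              + ∑ j ∈ Finset.univ.erase i', c i' j * σ i' * p i' j)
            + ∑ k ∈ Finset.univ.erase i', -(x k * (c i' k * σ i' * p i' k)) := by
        rw [Finset.sum_congr rfl (fun k _ => (by ring :
          c i' k * σ i' * p i' k * (x i' - x k)
            = x i' * (c i' k * σ i' * p i' k) + -(x k * (c i' k * σ i' * p i' k))))]
        rw [Finset.sum_add_distrib, mul_add, Finset.mul_sum]
        ring
      rw [hgoal, hcol]
    intro u v huv
    have huv' : Matrix.vecMul u D = Matrix.vecMul v D := huv
    have h0 : D.vecMul (u - v) = 0 := by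
      rw [Matrix.sub_vecMul, huv', sub_self]
    have := hker _ h0
    exact sub_eq_zero.mp this
  have hmul : Function.Injective D.mulVec :=
    Matrix.mulVec_injective_iff_isUnit.mpr hunit
  -- both τ and τ' solve the same linear system
  set τ : Fin N → ℝ := fun i => ∑ I ∈ K.powerset.filter (fun I => i ∉ I), ρ I with hτ
  set τ' : Fin N → ℝ := fun i => ∑ I ∈ K.powerset.filter (fun I => i ∉ I), ρ' I with hτ'
  have heq : D.mulVec τ' = D.mulVec τ := by
    funext k
    have h1 := hconc1 ρ hβ k
    have h2 := hconc1 ρ' hβ' k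
    have e1 : D.mulVec τ k = ∑ i, τ i * D k i := by
      simp [Matrix.mulVec, dotProduct, mul_comm]
    have e2 : D.mulVec τ' k = ∑ i, τ' i * D k i := by
      simp [Matrix.mulVec, dotProduct, mul_comm]
    rw [e1, e2]
    have hDk : ∀ i', D k i' = (if k = i'
        then cm i' * σ i' * p0 i' + ∑ j ∈ Finset.univ.erase i', c i' j * σ i' * p i' j
        else -(c i' k * σ i' * p i' k)) := fun i' => rfl
    simp only [hDk]
    rw [h1, h2]
  have := hmul heq
  exact congrFun this i
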